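/- Let (Ω, F, P, θ) be a stationary ergodic quadruple carrying σ, τ as in the context and let p ≥ 1. Let U be any measurable, almost surely finite Ō_p-valued random vector with U∘θ = H^p(U) P-a.s., and let Y be any measurable, almost surely finite Ō_p-valued random vector with Y∘θ = Ψ^p(Y) P-a.s. Then U(i) ≤ Y(i) almost surely for every i ∈ {1,…,p}. -/

import Mathlib

open MeasureTheory ProbabilityTheory Filter

noncomputable section

/-- Positive part `[x]⁺ = max(x,0)`. -/
def pos (x : ℝ) : ℝ := max x 0

/-- Nondecreasing rearrangement of a finite real vector. -/
def sortVec {n : ℕ} (u : Fin n → ℝ) : Fin n → ℝ := u ∘ Tuple.sort u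

/-- `u` belongs to `Ō_n`: nonnegative and nondecreasing coordinates. -/
def OSorted {n : ℕ} (u : Fin n → ℝ) : Prop := (∀ i, 0 ≤ u i) ∧ Monotone u

/-- Two-sided iterates `θ^n`, `n ∈ ℤ`, of a measurable bijection. -/
def iterZ {Ω : Type*} [MeasurableSpace Ω] (θ : Ω ≃ᵐ Ω) : ℤ → Ω → Ω
  | Int.ofNat n => (⇑θ)^[n]
  | Int.negSucc n => (⇑θ.symm)^[n + 1]

/-- The term `σ∘θ^{-k} − Σ_{i=1}^k τ∘θ^{-i}` (here `θinv = θ⁻¹`). -/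
def Zterm {Ω : Type*} (θinv : Ω → Ω) (σ τ : Ω → ℝ) (k : ℕ) (ω : Ω) : ℝ :=
  σ (θinv^[k] ω) - ∑ i ∈ Finset.Icc 1 k, τ (θinv^[i] ω)

/-- `Z_ℓ = [sup_{k ≥ ℓ} (σ∘θ^{-k} − Σ_{i=1}^k τ∘θ^{-i})]⁺`. -/
def Zfam {Ω : Type*} (θinv : Ω → Ω) (σ τ : Ω → ℝ) (ℓ : ℕ) (ω : Ω) : ℝ :=
  pos (⨆ k : {k : ℕ // ℓ ≤ k}, Zterm θinv σ τ (k : ℕ) ω)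

/-- GI/GI input: the doubly infinite sequences `(σ∘θ^n)` and `(τ∘θ^n)` are
jointly independent, and each is identically distributed. -/
def GIGI {Ω : Type*} [MeasurableSpace Ω] (μ : Measure Ω) (θ : Ω ≃ᵐ Ω) (σ τ : Ω → ℝ) : Prop :=
  iIndepFun
    (fun x : ℤ × Bool => fun ω => if x.2 then σ (iterZ θ x.1 ω) else τ (iterZ θ x.1 ω)) μ
  ∧ (∀ n : ℤ, IdentDistrib (fun ω => σ (iterZ θ n ω)) σ μ μ)
  ∧ (∀ n : ℤ, IdentDistrib (fun ω => τ (iterZ θ n ω)) τ μ μ)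

/-- The distribution of `τ` has unbounded support. -/
def UnboundedSupport {Ω : Type*} [MeasurableSpace Ω] (μ : Measure Ω) (τ : Ω → ℝ) : Prop :=
  ∀ M : ℝ, 0 < M → 0 < μ {ω | M < τ ω}

/-- The Kiefer–Wolfowitz map `G(u) = sorted [u + σe₁ − τ𝟙]⁺`. -/
def Gmap (S : ℕ) (σ τ : ℝ) (u : Fin S → ℝ) : Fin S → ℝ :=
  sortVec fun i => pos (u i + (if (i : ℕ) = 0 then σ else 0) - τ)

/-- The map `G^p` driving the J_{p+1}SW service profile. -/
def Gp (S p : ℕ) (hS : 0 < S) (σ τ : ℝ) (u : Fin S → ℝ) : Fin S → ℝ :=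
  if u ⟨0, hS⟩ = 0 then Gmap S σ τ u
  else sortVec fun i => pos (u i + (if (i : ℕ) = p then σ else 0) - τ)

/-- The map `Γ^p`. -/
def Gamma (p : ℕ) (σ τ : ℝ) (u : Fin p → ℝ) : Fin p → ℝ := fun j =>
  if h : (j : ℕ) + 1 < p then pos (u ⟨(j : ℕ) + 1, h⟩ - τ) else pos (max (u j) σ - τ)

/-- The map `Ψ^p`. -/
def Psi (p : ℕ) (σ τ : ℝ) (u : Fin p → ℝ) : Fin p → ℝ := fun j =>
  if h : (j : ℕ) + 1 < p then pos (min (max (u j) σ) (u ⟨(j : ℕ) + 1, h⟩) - τ)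
  else pos (max (u j) σ - τ)

/-- The map `Φ^p` on `Ō_S` (with `1 ≤ p < S`). -/
def Phi (S p : ℕ) (hp : p < S) (σ τ : ℝ) (u : Fin S → ℝ) : Fin S → ℝ := fun j =>
  let ind : ℝ := if 0 < u ⟨0, Nat.lt_of_le_of_lt (Nat.zero_le p) hp⟩ then u ⟨p, hp⟩ else 0
  if h : (j : ℕ) + 1 < S then
    if (j : ℕ) < p then pos (min (max (u j) σ) (u ⟨(j : ℕ) + 1, h⟩) - τ)
    else pos (min (max (u j) (σ + ind)) (u ⟨(j : ℕ) + 1, h⟩) - τ)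
  else pos (max (u j) (σ + ind) - τ)

/-- The loss-system map `H^p(u) = sorted [u + σ·1_{u(1)=0}e₁ − τ𝟙]⁺`. -/
def Hmap (p : ℕ) (hp : 0 < p) (σ τ : ℝ) (u : Fin p → ℝ) : Fin p → ℝ :=
  sortVec fun i => pos (u i + (if (i : ℕ) = 0 ∧ u ⟨0, hp⟩ = 0 then σ else 0) - τ)

end

section AuxProofs

lemma pos_mono {a b : ℝ} (h : a ≤ b) : pos a ≤ pos b := max_le_max h le_rfl

lemma pos_add_le {a b d : ℝ} (h : a ≤ b + d) (hd : 0 ≤ d) : pos a ≤ pos b + d := by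
  calc pos a = max a 0 := rfl
    _ ≤ max (b + d) (0 + d) := max_le_max h (by linarith)
    _ = max b 0 + d := max_add_add_right b 0 d
    _ = pos b + d := rfl

lemma sortVec_le_of_le {n : ℕ} {x w : Fin n → ℝ}
    (h : ∀ i j : Fin n, i ≤ j → x i ≤ w j) (j : Fin n) : sortVec x j ≤ w j := by
  classical
  set π := Tuple.sort x with hπ
  have hcard : ((Finset.Iic j).image π.symm).card = (j : ℕ) + 1 := by
    rw [Finset.card_image_of_injective _ π.symm.injective, Fin.card_Iic]
  have hex : ∃ l ∈ (Finset.Iic j).image π.symm, j ≤ l := by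
    by_contra hcon
    push_neg at hcon
    have hsub : (Finset.Iic j).image π.symm ⊆ Finset.Iio j :=
      fun l hl => Finset.mem_Iio.2 (hcon l hl)
    have := Finset.card_le_card hsub
    rw [hcard, Fin.card_Iio] at this
    omega
  obtain ⟨l, hl, hjl⟩ := hex
  obtain ⟨i, hi, hil⟩ := Finset.mem_image.1 hl
  have h1 : sortVec x j ≤ x i := by
    have hm := Tuple.monotone_sort x hjl
    have : x (π l) = x i := by rw [← hil]; simp
    rw [hπ] at this
    simpa [sortVec, hπ, this] using hm
  exact h1.trans (h i j (Finset.mem_Iic.1 hi))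

lemma psi_ge {p : ℕ} {σ τ : ℝ} {u : Fin p → ℝ} (hu : Monotone u) (j : Fin p) :
    pos (u j - τ) ≤ Psi p σ τ u j := by
  unfold Psi
  split
  case isTrue h =>
    refine pos_mono (by
      have h1 : u j ≤ max (u j) σ := le_max_left _ _
      have h2 : u j ≤ u ⟨(j : ℕ) + 1, h⟩ := hu (by simp [Fin.le_def])
      have := le_min h1 h2
      linarith)
  case isFalse h =>
    exact pos_mono (by linarith [le_max_left (u j) σ])

lemma psi_mono {p : ℕ} {σ τ : ℝ} {u : Fin p → ℝ} (hu : Monotone u) :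
    Monotone (Psi p σ τ u) := by
  intro a b hab
  rcases eq_or_lt_of_le hab with rfl | hlt
  · exact le_rfl
  have hab' : (a : ℕ) + 1 ≤ (b : ℕ) := hlt
  have ha : (a : ℕ) + 1 < p := lt_of_le_of_lt hab' b.isLt
  have key : Psi p σ τ u a ≤ pos (u b - τ) := by
    unfold Psi
    rw [dif_pos ha]
    refine pos_mono (by
      have h2 : u ⟨(a : ℕ) + 1, ha⟩ ≤ u b := hu (by simpa [Fin.le_def] using hab')
      have := min_le_right (max (u a) σ) (u ⟨(a : ℕ) + 1, ha⟩)
      linarith)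
  exact key.trans (psi_ge hu b)



lemma psi_lip {p : ℕ} {σ τ d : ℝ} (hd : 0 ≤ d) {u y : Fin p → ℝ}
    (h : ∀ i, u i ≤ y i + d) (j : Fin p) : Psi p σ τ u j ≤ Psi p σ τ y j + d := by
  have hmax : max (u j) σ ≤ max (y j) σ + d := by
    refine max_le ?_ ?_
    · linarith [h j, le_max_left (y j) σ]
    · linarith [le_max_right (y j) σ]
  unfold Psi
  by_cases hc : (j : ℕ) + 1 < p
  · rw [dif_pos hc, dif_pos hc]
    refine pos_add_le ?_ hd
    have h2 : u ⟨(j : ℕ) + 1, hc⟩ ≤ y ⟨(j : ℕ) + 1, hc⟩ + d := h _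
    have := min_le_min hmax h2
    rw [min_add_add_right] at this
    linarith
  · rw [dif_neg hc, dif_neg hc]
    exact pos_add_le (by linarith) hd

lemma max_analysis {u₀ y₀ σ c : ℝ} (hc : 0 < c) (hu : u₀ ≤ y₀ + c)
    (heq : max u₀ σ = max y₀ σ + c) : u₀ = y₀ + c ∧ σ ≤ y₀ := by
  have hσy : σ ≤ y₀ := by
    by_contra hσ'
    push_neg at hσ'
    have h1 : max y₀ σ = σ := max_eq_right hσ'.le
    have h2 : max u₀ σ ≤ max (y₀ + c) σ := max_le (by linarith [le_max_left (y₀+c) σ]) (le_max_right _ _)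
    have h3 : max (y₀ + c) σ < σ + c := max_lt (by linarith) (by linarith)
    rw [heq, h1] at h2
    linarith
  refine ⟨?_, hσy⟩
  have h1 : max y₀ σ = y₀ := max_eq_left hσy
  rw [h1] at heq
  rcases max_choice u₀ σ with h2 | h2
  · linarith [heq, h2]
  · rw [h2] at heq; linarith

lemma scalar_eq {m m' τ c : ℝ} (hc : 0 < c) (hm : m ≤ m' + c)
    (hE : pos (m - τ) = pos (m' - τ) + c) :
    m = m' + c ∧ τ ≤ m' ∧ pos (m' - τ) = m' - τ := by
  have hp0 : (0:ℝ) ≤ pos (m' - τ) := le_max_right _ _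
  have hposm : pos (m - τ) = m - τ := by
    rcases le_or_gt (m - τ) 0 with hle | hlt
    · rw [pos, max_eq_right hle] at hE; linarith
    · rw [pos, max_eq_left hlt.le]
  rw [hposm] at hE
  have h3 : pos (m' - τ) = m' - τ := le_antisymm (by linarith) (le_max_left _ _)
  have h4 : (0:ℝ) ≤ m' - τ := by rw [← h3]; exact le_max_right _ _
  exact ⟨by linarith [hE, h3], by linarith, h3⟩

lemma psi_eq_analysis {p : ℕ} {σ τ c : ℝ} {u y : Fin p → ℝ}
    (hc : 0 < c) (hd : ∀ i, u i ≤ y i + c) {j : Fin p}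
    (hE : Psi p σ τ u j = Psi p σ τ y j + c) :
    (∃ h : (j : ℕ) + 1 < p, u ⟨(j : ℕ) + 1, h⟩ = y ⟨(j : ℕ) + 1, h⟩ + c) ∨
      (u j = y j + c ∧ σ ≤ y j ∧ τ ≤ y j ∧ Psi p σ τ y j = y j - τ) := by
  have hmax : max (u j) σ ≤ max (y j) σ + c := by
    refine max_le ?_ ?_
    · linarith [hd j, le_max_left (y j) σ]
    · linarith [le_max_right (y j) σ]
  by_cases hcase : (j : ℕ) + 1 < p
  · set j1 : Fin p := ⟨(j : ℕ) + 1, hcase⟩ with hj1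
    have hEE : pos (min (max (u j) σ) (u j1) - τ) = pos (min (max (y j) σ) (y j1) - τ) + c := by
      unfold Psi at hE; rw [dif_pos hcase, dif_pos hcase] at hE; exact hE
    have hm : min (max (u j) σ) (u j1) ≤ min (max (y j) σ) (y j1) + c := by
      have := min_le_min hmax (hd j1)
      rw [min_add_add_right] at this
      linarith
    obtain ⟨hmm, hτm, hpos'⟩ := scalar_eq hc hm hEE
    by_cases hb : y j1 ≤ max (y j) σ
    · have hm' : min (max (y j) σ) (y j1) = y j1 := min_eq_right hb
      rw [hm'] at hmm
      have : u j1 = y j1 + c :=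
        le_antisymm (hd j1) (by linarith [min_le_right (max (u j) σ) (u j1)])
      exact Or.inl ⟨hcase, this⟩
    · push_neg at hb
      have hm' : min (max (y j) σ) (y j1) = max (y j) σ := min_eq_left hb.le
      rw [hm'] at hmm hτm hpos'
      have ha : max (u j) σ = max (y j) σ + c :=
        le_antisymm hmax (by linarith [min_le_left (max (u j) σ) (u j1)])
      obtain ⟨h1, h2⟩ := max_analysis hc (hd j) ha
      have hy : max (y j) σ = y j := max_eq_left h2
      rw [hy] at hτm hpos'
      refine Or.inr ⟨h1, h2, hτm, ?_⟩
      unfold Psi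
      rw [dif_pos hcase, ← hj1, hm', hy, hpos']
  · have hEE : pos (max (u j) σ - τ) = pos (max (y j) σ - τ) + c := by
      unfold Psi at hE; rw [dif_neg hcase, dif_neg hcase] at hE; exact hE
    obtain ⟨hmm, hτm, hpos'⟩ := scalar_eq hc hmax hEE
    obtain ⟨h1, h2⟩ := max_analysis hc (hd j) hmm
    have hy : max (y j) σ = y j := max_eq_left h2
    rw [hy] at hτm hpos'
    refine Or.inr ⟨h1, h2, hτm, ?_⟩
    unfold Psi
    rw [dif_neg hcase, hy, hpos']


lemma sortVec_comp_perm {n : ℕ} (f : Fin n → ℝ) (π : Equiv.Perm (Fin n)) :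
    sortVec (f ∘ π) = sortVec f := by
  unfold sortVec
  exact Tuple.comp_perm_comp_sort_eq_comp_sort

lemma Hmap_le_Psi {p : ℕ} (hp : 0 < p) {σ τ : ℝ} (hσ : 0 ≤ σ) {u : Fin p → ℝ}
    (hu : OSorted u) (j : Fin p) : Hmap p hp σ τ u j ≤ Psi p σ τ u j := by
  classical
  obtain ⟨hu0, hum⟩ := hu
  by_cases h0 : u ⟨0, hp⟩ = 0
  case neg =>
    have hv : (fun i : Fin p => pos (u i + (if (i : ℕ) = 0 ∧ u ⟨0, hp⟩ = 0 then σ else 0) - τ))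
        = fun i => pos (u i - τ) := by
      funext i; simp [h0]
    unfold Hmap
    rw [hv]
    refine sortVec_le_of_le (fun i j hij => ?_) j
    exact (pos_mono (by linarith [hum hij] : u i - τ ≤ u j - τ)).trans (psi_ge hum j)
  case pos =>
    obtain ⟨n, rfl⟩ : ∃ n, p = n + 1 := ⟨p - 1, by omega⟩
    set K := Finset.univ.filter (fun i : Fin (n+1) => u i ≤ σ) with hK
    have h00 : (⟨0, hp⟩ : Fin (n+1)) = 0 := rfl
    have hKne : K.Nonempty := ⟨⟨0, hp⟩, by
      simp only [hK, Finset.mem_filter, Finset.mem_univ, true_and]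
      rw [h0]; exact hσ⟩
    set k := K.max' hKne with hk
    have h00' : u (0 : Fin (n+1)) = 0 := by rw [← h00]; exact h0
    have hkσ : u k ≤ σ := (Finset.mem_filter.1 (K.max'_mem hKne)).2
    have hle : ∀ i : Fin (n+1), i ≤ k → u i ≤ σ := fun i hi => (hum hi).trans hkσ
    have hgt : ∀ i : Fin (n+1), k < i → σ < u i := by
      intro i hi
      by_contra hcon
      push_neg at hcon
      exact absurd (K.le_max' i (by simp [hK, hcon])) (not_le.2 hi)
    set v : Fin (n+1) → ℝ := fun i => pos (u i + (if (i : ℕ) = 0 then σ else 0) - τ) with hv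
    have hveq : (fun i : Fin (n+1) =>
        pos (u i + (if (i : ℕ) = 0 ∧ u ⟨0, hp⟩ = 0 then σ else 0) - τ)) = v := by
      funext i; simp [hv, h0, h00']
    unfold Hmap
    rw [hveq, ← sortVec_comp_perm v (Fin.cycleRange k)]
    refine sortVec_le_of_le (fun i j hij => ?_) j
    refine le_trans (?_ : (v ∘ Fin.cycleRange k) i ≤ Psi (n+1) σ τ u i) (psi_mono hum hij)
    rcases lt_trichotomy i k with hik | heq | hki
    · -- i < k
      have hrw : Fin.cycleRange k i = i + 1 := Fin.cycleRange_of_lt hik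
      have hlast : (i : ℕ) + 1 < n + 1 := by
        have : (i : ℕ) < (k : ℕ) := hik
        have : (k : ℕ) < n + 1 := k.isLt
        omega
      have hval : ((i + 1 : Fin (n+1)) : ℕ) = (i : ℕ) + 1 := by
        rw [Fin.val_add_one_of_lt]
        rw [Fin.lt_iff_val_lt_val]
        simp [Fin.last]
        omega
      have hfin : (i + 1 : Fin (n+1)) = ⟨(i : ℕ) + 1, hlast⟩ := Fin.ext hval
      have hvv : (v ∘ Fin.cycleRange k) i = pos (u ⟨(i : ℕ) + 1, hlast⟩ - τ) := by
        simp only [Function.comp_apply, hrw, hv, hfin]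
        norm_num
      rw [hvv]
      unfold Psi
      rw [dif_pos hlast]
      refine pos_mono ?_
      have h1 : u ⟨(i : ℕ) + 1, hlast⟩ ≤ σ := by
        refine hle _ ?_
        rw [Fin.le_def]
        simpa using hik
      have h2 : u ⟨(i : ℕ) + 1, hlast⟩ ≤ max (u i) σ := le_trans h1 (le_max_right _ _)
      have := le_min h2 (le_refl (u ⟨(i : ℕ) + 1, hlast⟩))
      linarith
    · -- i = k
      rw [heq]
      have hrw : Fin.cycleRange k k = 0 := Fin.cycleRange_self k
      have hvv : (v ∘ Fin.cycleRange k) k = pos (σ - τ) := by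
        simp only [Function.comp_apply, hrw, hv]
        simp [h00']
      rw [hvv]
      unfold Psi
      split
      case isTrue h =>
        refine pos_mono ?_
        have h1 : σ ≤ max (u k) σ := le_max_right _ _
        have h2 : σ ≤ u ⟨(k : ℕ) + 1, h⟩ := by
          refine (hgt _ ?_).le
          rw [Fin.lt_def]; simp
        have := le_min h1 h2
        linarith
      case isFalse h =>
        exact pos_mono (by linarith [le_max_right (u k) σ])
    · -- k < i
      have hrw : Fin.cycleRange k i = i := Fin.cycleRange_of_gt hki
      have hi0 : (i : ℕ) ≠ 0 := by
        have : (k : ℕ) < (i : ℕ) := hki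
        omega
      have hvv : (v ∘ Fin.cycleRange k) i = pos (u i - τ) := by
        simp only [Function.comp_apply, hrw, hv, hi0, if_neg hi0]
        norm_num
      rw [hvv]
      exact psi_ge hum i

lemma ergodic_ae_const {Ω : Type*} [MeasurableSpace Ω] {μ : Measure Ω} [IsProbabilityMeasure μ]
    {θ : Ω → Ω} (herg : Ergodic θ μ) {f : Ω → ℝ} (hf : Measurable f)
    (hle : ∀ᵐ ω ∂μ, f (θ ω) ≤ f ω) : ∃ c : ℝ, f =ᵐ[μ] fun _ => c := by
  have hdich : ∀ q : ℝ, μ {ω | f ω ≤ q} = 0 ∨ μ {ω | f ω ≤ q} = 1 := by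
    intro q
    have hsm : MeasurableSet {ω | f ω ≤ q} := hf measurableSet_Iic
    have hsub : {ω | f ω ≤ q} ≤ᵐ[μ] θ ⁻¹' {ω | f ω ≤ q} := by
      filter_upwards [hle] with ω h
      exact fun hm => le_trans h hm
    rcases herg.ae_empty_or_univ_of_ae_le_preimage' hsm.nullMeasurableSet hsub
        (measure_ne_top μ _) with h | h
    · left; simpa using measure_congr h
    · right; rw [measure_congr h, measure_univ]
  have hex1 : ∃ q : ℝ, μ {ω | f ω ≤ q} = 1 := by
    by_contra hcon
    push_neg at hcon
    have h0 : ∀ n : ℕ, μ {ω | f ω ≤ (n : ℝ)} = 0 :=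
      fun n => (hdich n).resolve_right (hcon n)
    have hU : μ (⋃ n : ℕ, {ω | f ω ≤ (n : ℝ)}) = 0 := measure_iUnion_null h0
    have huniv : (⋃ n : ℕ, {ω | f ω ≤ (n : ℝ)}) = Set.univ := by
      ext ω
      simp only [Set.mem_iUnion, Set.mem_setOf_eq, Set.mem_univ, iff_true]
      exact exists_nat_ge (f ω)
    rw [huniv, measure_univ] at hU
    simp at hU
  have hex0 : ∃ q : ℝ, μ {ω | f ω ≤ q} = 0 := by
    by_contra hcon
    push_neg at hcon
    have h1 : ∀ n : ℕ, μ {ω | f ω ≤ -(n : ℝ)} = 1 :=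
      fun n => (hdich _).resolve_left (hcon _)
    have hnull : ∀ n : ℕ, μ {ω | f ω ≤ -(n : ℝ)}ᶜ = 0 := by
      intro n
      have hsm : MeasurableSet {ω | f ω ≤ -(n:ℝ)} := hf measurableSet_Iic
      exact (prob_compl_eq_zero_iff hsm).2 (h1 n)
    have hU : μ (⋃ n : ℕ, {ω | f ω ≤ -(n : ℝ)}ᶜ) = 0 := measure_iUnion_null hnull
    have huniv : (⋃ n : ℕ, {ω | f ω ≤ -(n : ℝ)}ᶜ) = Set.univ := by
      ext ω
      simp only [Set.mem_iUnion, Set.mem_compl_iff, Set.mem_setOf_eq, not_le, Set.mem_univ,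
        iff_true]
      obtain ⟨n, hn⟩ := exists_nat_gt (-f ω)
      exact ⟨n, by linarith⟩
    rw [huniv, measure_univ] at hU
    simp at hU
  set S : Set ℝ := {x : ℝ | μ {ω | f ω ≤ x} = 1} with hS
  obtain ⟨q1, hq1⟩ := hex1
  obtain ⟨q0, hq0⟩ := hex0
  have hSne : S.Nonempty := ⟨q1, hq1⟩
  have hSbdd : BddBelow S := by
    refine ⟨q0, fun y hy => ?_⟩
    by_contra hcon
    push_neg at hcon
    have : μ {ω | f ω ≤ y} ≤ μ {ω | f ω ≤ q0} :=
      measure_mono (fun ω h => le_trans h hcon.le)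
    rw [hy, hq0] at this
    simp at this
  set c := sInf S with hc
  refine ⟨c, ?_⟩
  have hA : ∀ᵐ ω ∂μ, f ω ≤ c := by
    have hinter : {ω | f ω ≤ c} = ⋂ n : ℕ, {ω | f ω ≤ c + 1 / (n + 1)} := by
      ext ω
      simp only [Set.mem_setOf_eq, Set.mem_iInter]
      constructor
      · intro h n
        have : (0:ℝ) < 1 / ((n:ℝ) + 1) := by positivity
        linarith
      · intro h
        by_contra hcon
        push_neg at hcon
        obtain ⟨n, hn⟩ := exists_nat_one_div_lt (sub_pos.2 hcon)
        have := h n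
        linarith
    have hone : ∀ n : ℕ, μ {ω | f ω ≤ c + 1 / ((n:ℝ) + 1)} = 1 := by
      intro n
      have hpos : (0:ℝ) < 1 / ((n:ℝ) + 1) := by positivity
      obtain ⟨s, hsS, hs⟩ := (csInf_lt_iff hSbdd hSne).1 (by linarith : c < c + 1 / ((n:ℝ)+1))
      refine le_antisymm prob_le_one ?_
      have hmono : μ {ω | f ω ≤ s} ≤ μ {ω | f ω ≤ c + 1 / ((n:ℝ) + 1)} :=
        measure_mono (fun ω h => le_trans h hs.le)
      have hseq : μ {ω | f ω ≤ s} = 1 := hsS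
      rw [hseq] at hmono
      exact hmono
    have hcompl : μ {ω | f ω ≤ c}ᶜ = 0 := by
      rw [hinter, Set.compl_iInter]
      refine measure_iUnion_null (fun n => ?_)
      have hsm : MeasurableSet {ω | f ω ≤ c + 1 / ((n:ℝ) + 1)} := hf measurableSet_Iic
      exact (prob_compl_eq_zero_iff hsm).2 (hone n)
    refine (ae_iff).2 ?_
    have : {a | ¬ f a ≤ c} = {ω | f ω ≤ c}ᶜ := by ext a; simp
    rw [this]
    exact hcompl
  have hB : ∀ᵐ ω ∂μ, ¬ f ω < c := by
    have hunion : {ω | f ω < c} = ⋃ n : ℕ, {ω | f ω ≤ c - 1 / (n + 1)} := by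
      ext ω
      simp only [Set.mem_setOf_eq, Set.mem_iUnion]
      constructor
      · intro h
        obtain ⟨n, hn⟩ := exists_nat_one_div_lt (sub_pos.2 h)
        exact ⟨n, by linarith⟩
      · intro ⟨n, hn⟩
        have : (0:ℝ) < 1 / ((n:ℝ) + 1) := by positivity
        linarith
    have hzero : ∀ n : ℕ, μ {ω | f ω ≤ c - 1 / ((n:ℝ) + 1)} = 0 := by
      intro n
      have hpos : (0:ℝ) < 1 / ((n:ℝ) + 1) := by positivity
      refine (hdich _).resolve_right (fun h1 => ?_)
      have : c ≤ c - 1 / ((n:ℝ) + 1) := csInf_le hSbdd h1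
      linarith
    have : μ {ω | f ω < c} = 0 := by
      rw [hunion]; exact measure_iUnion_null hzero
    exact (ae_iff).2 (by simpa using this)
  filter_upwards [hA, hB] with ω h1 h2
  exact le_antisymm h1 (not_lt.1 h2)

end AuxProofs

theorem stmt19 {Ω : Type*} [MeasurableSpace Ω] (μ : MeasureTheory.Measure Ω)
    [MeasureTheory.IsProbabilityMeasure μ]
    (θ : Ω ≃ᵐ Ω) (hergo : Ergodic (⇑θ) μ)
    (σ τ : Ω → ℝ) (hσint : MeasureTheory.Integrable σ μ) (hτint : MeasureTheory.Integrable τ μ)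
    (hσ0 : ∀ᵐ ω ∂μ, 0 ≤ σ ω) (hτ0 : ∀ᵐ ω ∂μ, 0 < τ ω)
    (p : ℕ) (hp : 1 ≤ p)
    (U : Ω → Fin p → ℝ) (hUm : Measurable U) (hUs : ∀ᵐ ω ∂μ, OSorted (U ω))
    (hUr : ∀ᵐ ω ∂μ, U (θ ω) = Hmap p (by omega) (σ ω) (τ ω) (U ω))
    (Y : Ω → Fin p → ℝ) (hYm : Measurable Y) (hYs : ∀ᵐ ω ∂μ, OSorted (Y ω))
    (hYr : ∀ᵐ ω ∂μ, Y (θ ω) = Psi p (σ ω) (τ ω) (Y ω)) :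
    ∀ᵐ ω ∂μ, ∀ i : Fin p, U ω i ≤ Y ω i := by
  classical
  have hp0 : 0 < p := hp
  have hne : (Finset.univ : Finset (Fin p)).Nonempty := ⟨⟨0, hp0⟩, Finset.mem_univ _⟩
  have hUj : ∀ j : Fin p, Measurable fun ω => U ω j := fun j => (measurable_pi_apply j).comp hUm
  have hYj : ∀ j : Fin p, Measurable fun ω => Y ω j := fun j => (measurable_pi_apply j).comp hYm
  set D : Ω → ℝ := fun ω => max (Finset.univ.sup' hne fun j => U ω j - Y ω j) 0 with hD
  have hDm : Measurable D := by
    have h1 : Measurable (Finset.univ.sup' hne (fun (j : Fin p) (ω : Ω) => U ω j - Y ω j)) :=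
      Finset.measurable_sup' hne (fun j _ => (hUj j).sub (hYj j))
    have h2 : (fun ω => Finset.univ.sup' hne fun j => U ω j - Y ω j)
        = Finset.univ.sup' hne (fun (j : Fin p) (ω : Ω) => U ω j - Y ω j) := by
      funext ω; rw [Finset.sup'_apply]
    rw [hD]
    exact (h2 ▸ h1).max measurable_const
  have hD0 : ∀ ω, 0 ≤ D ω := fun ω => le_max_right _ _
  have hDle : ∀ ω (j : Fin p), U ω j - Y ω j ≤ D ω := fun ω j =>
    le_trans (Finset.le_sup' (fun j => U ω j - Y ω j) (Finset.mem_univ j)) (le_max_left _ _)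
  have hqmp := hergo.quasiMeasurePreserving
  haveI : (ae μ).NeBot := ae_neBot.2 (IsProbabilityMeasure.ne_zero μ)
  have hstep : ∀ᵐ ω ∂μ, ∀ j : Fin p, U (θ ω) j ≤ Y (θ ω) j + D ω := by
    filter_upwards [hUr, hYr, hUs, hYs, hσ0] with ω hU' hY' hUso hYso hσ' j
    have hUθ : U (θ ω) j = Hmap p hp0 (σ ω) (τ ω) (U ω) j := congrFun hU' j
    have h1 : U (θ ω) j ≤ Psi p (σ ω) (τ ω) (U ω) j := by
      rw [hUθ]; exact Hmap_le_Psi hp0 hσ' hUso j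
    have h2 : Psi p (σ ω) (τ ω) (U ω) j ≤ Psi p (σ ω) (τ ω) (Y ω) j + D ω :=
      psi_lip (hD0 ω) (fun i => by linarith [hDle ω i]) j
    have hYθ : Y (θ ω) j = Psi p (σ ω) (τ ω) (Y ω) j := congrFun hY' j
    linarith [hYθ]
  have hDstep : ∀ᵐ ω ∂μ, D (θ ω) ≤ D ω := by
    filter_upwards [hstep] with ω h
    exact max_le (Finset.sup'_le _ _ fun j _ => by linarith [h j]) (hD0 ω)
  obtain ⟨c, hDc⟩ := ergodic_ae_const hergo hDm hDstep
  have hDcθ : ∀ᵐ ω ∂μ, D (θ ω) = c := hqmp.ae hDc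
  have hc0 : 0 ≤ c := by
    obtain ⟨ω₀, h⟩ := hDc.exists
    have h' : D ω₀ = c := h
    rw [← h']; exact hD0 ω₀
  rcases eq_or_lt_of_le hc0 with hceq | hcpos
  · filter_upwards [hDc] with ω h i
    have h2 := hDle ω i
    rw [h, ← hceq] at h2
    linarith
  · -- c > 0 : derive a contradiction
    set F : Ω → Finset (Fin p) :=
      fun ω => Finset.univ.filter (fun j => U ω j - Y ω j = c) with hF
    have hFne : ∀ ω, D ω = c → (F ω).Nonempty := by
      intro ω h
      have hs : Finset.univ.sup' hne (fun j => U ω j - Y ω j) = c := by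
        rcases max_choice (Finset.univ.sup' hne fun j => U ω j - Y ω j) 0 with h1 | h1
        · rw [hD] at h; dsimp only at h; rw [h1] at h; exact h
        · exfalso; rw [hD] at h; dsimp only at h; rw [h1] at h; exact absurd h.symm (ne_of_gt hcpos)
      obtain ⟨j, _, hj⟩ := Finset.exists_mem_eq_sup' hne (fun j => U ω j - Y ω j)
      exact ⟨j, Finset.mem_filter.2 ⟨Finset.mem_univ j, by rw [← hj, hs]⟩⟩
    set g : Ω → ℝ :=
      fun ω => Finset.univ.sup' hne (fun j => if U ω j - Y ω j = c then ((j : ℕ) : ℝ) else 0)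
      with hg
    have hgm : Measurable g := by
      have h1 : Measurable (Finset.univ.sup' hne
          (fun (j : Fin p) (ω : Ω) => if U ω j - Y ω j = c then ((j : ℕ) : ℝ) else 0)) := by
        refine Finset.measurable_sup' hne (fun j _ => ?_)
        exact Measurable.ite (((hUj j).sub (hYj j)) (measurableSet_singleton c))
          measurable_const measurable_const
      have h2 : g = Finset.univ.sup' hne
          (fun (j : Fin p) (ω : Ω) => if U ω j - Y ω j = c then ((j : ℕ) : ℝ) else 0) := by
        funext ω; rw [hg, Finset.sup'_apply]
      rw [h2]; exact h1
    have hgeq : ∀ ω (h : (F ω).Nonempty), g ω = ((((F ω).max' h : Fin p) : ℕ) : ℝ) := by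
      intro ω h
      refine le_antisymm (Finset.sup'_le _ _ fun j _ => ?_) ?_
      · by_cases hP : U ω j - Y ω j = c
        · rw [if_pos hP]
          have hle := (F ω).le_max' j (Finset.mem_filter.2 ⟨Finset.mem_univ _, hP⟩)
          have hle' : (j : ℕ) ≤ (((F ω).max' h : Fin p) : ℕ) := hle
          exact_mod_cast hle'
        · rw [if_neg hP]; exact Nat.cast_nonneg _
      · have hmem := (F ω).max'_mem h
        have hPm : U ω ((F ω).max' h) - Y ω ((F ω).max' h) = c := (Finset.mem_filter.1 hmem).2
        have hle := Finset.le_sup'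
          (fun j : Fin p => if U ω j - Y ω j = c then ((j : ℕ) : ℝ) else 0)
          (Finset.mem_univ ((F ω).max' h))
        rw [if_pos hPm] at hle
        exact hle
    have hmain : ∀ᵐ ω ∂μ, ∀ j : Fin p, U (θ ω) j - Y (θ ω) j = c →
        ((∃ h : (j : ℕ) + 1 < p, U ω ⟨(j : ℕ) + 1, h⟩ - Y ω ⟨(j : ℕ) + 1, h⟩ = c) ∨
          (U ω j - Y ω j = c ∧ τ ω ≤ Y ω j ∧ Y (θ ω) j = Y ω j - τ ω)) := by
      filter_upwards [hUr, hYr, hUs, hYs, hσ0, hDc] with ω hU' hY' hUso hYso hσ' hDω j hPj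
      have hc' : ∀ i, U ω i ≤ Y ω i + c := fun i => by
        have := hDle ω i; rw [hDω] at this; linarith
      have hYθ : Y (θ ω) j = Psi p (σ ω) (τ ω) (Y ω) j := congrFun hY' j
      have hUθ : U (θ ω) j = Hmap p hp0 (σ ω) (τ ω) (U ω) j := congrFun hU' j
      have h1 : U (θ ω) j ≤ Psi p (σ ω) (τ ω) (U ω) j := by
        rw [hUθ]; exact Hmap_le_Psi hp0 hσ' hUso j
      have h2 : Psi p (σ ω) (τ ω) (U ω) j ≤ Psi p (σ ω) (τ ω) (Y ω) j + c :=
        psi_lip hcpos.le hc' j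
      have hE : Psi p (σ ω) (τ ω) (U ω) j = Psi p (σ ω) (τ ω) (Y ω) j + c := by
        rw [hYθ] at hPj
        linarith
      rcases psi_eq_analysis hcpos hc' hE with ⟨h, heq⟩ | ⟨h1', _, h3', h4'⟩
      · exact Or.inl ⟨h, by linarith⟩
      · exact Or.inr ⟨by linarith, h3', by rw [hYθ, h4']⟩
    have hgstep : ∀ᵐ ω ∂μ, g (θ ω) ≤ g ω := by
      filter_upwards [hmain, hDcθ] with ω hm hDθ
      have hθne : (F (θ ω)).Nonempty := hFne (θ ω) hDθ
      set jm := (F (θ ω)).max' hθne with hjm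
      have hPjm : U (θ ω) jm - Y (θ ω) jm = c :=
        (Finset.mem_filter.1 ((F (θ ω)).max'_mem hθne)).2
      have hgθ : g (θ ω) = ((jm : ℕ) : ℝ) := hgeq (θ ω) hθne
      rcases hm jm hPjm with ⟨h, hP'⟩ | ⟨hP', _, _⟩
      · have hle := Finset.le_sup'
          (fun j : Fin p => if U ω j - Y ω j = c then ((j : ℕ) : ℝ) else 0)
          (Finset.mem_univ (⟨(jm : ℕ) + 1, h⟩ : Fin p))
        rw [if_pos hP'] at hle
        rw [hgθ]
        refine le_trans ?_ hle
        push_cast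
        linarith
      · have hle := Finset.le_sup'
          (fun j : Fin p => if U ω j - Y ω j = c then ((j : ℕ) : ℝ) else 0)
          (Finset.mem_univ jm)
        rw [if_pos hP'] at hle
        rw [hgθ]
        exact hle
    obtain ⟨k, hgc⟩ := ergodic_ae_const hergo hgm hgstep
    have hgcθ : ∀ᵐ ω ∂μ, g (θ ω) = k := hqmp.ae hgc
    obtain ⟨ω₀, hA1, hA3⟩ := (hDc.and hgc).exists
    have hω₀ne : (F ω₀).Nonempty := hFne ω₀ hA1
    set m : Fin p := (F ω₀).max' hω₀ne with hmdef
    have hkm : k = ((m : ℕ) : ℝ) := by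
      have hA3' : g ω₀ = k := hA3
      rw [← hA3']; exact hgeq ω₀ hω₀ne
    have hYstep : ∀ᵐ ω ∂μ, Y (θ ω) m = Y ω m - τ ω ∧ 0 < τ ω := by
      filter_upwards [hmain, hDc, hDcθ, hgc, hgcθ, hτ0] with ω hmn hDω hDθ hgω hgθ hτ
      have hωne : (F ω).Nonempty := hFne ω hDω
      have hθne : (F (θ ω)).Nonempty := hFne (θ ω) hDθ
      have heq1 : (F ω).max' hωne = m := by
        have hcast : ((((F ω).max' hωne : Fin p) : ℕ) : ℝ) = ((m : ℕ) : ℝ) := by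
          rw [← hgeq ω hωne, hgω, hkm]
        exact Fin.ext (Nat.cast_injective hcast)
      have heq2 : (F (θ ω)).max' hθne = m := by
        have hcast : ((((F (θ ω)).max' hθne : Fin p) : ℕ) : ℝ) = ((m : ℕ) : ℝ) := by
          rw [← hgeq (θ ω) hθne, hgθ, hkm]
        exact Fin.ext (Nat.cast_injective hcast)
      have hPm : U (θ ω) m - Y (θ ω) m = c := by
        rw [← heq2]
        exact (Finset.mem_filter.1 ((F (θ ω)).max'_mem hθne)).2
      rcases hmn m hPm with ⟨h, hP'⟩ | ⟨_, _, h3'⟩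
      · exfalso
        have hmem : (⟨(m : ℕ) + 1, h⟩ : Fin p) ∈ F ω :=
          Finset.mem_filter.2 ⟨Finset.mem_univ _, hP'⟩
        have hle := (F ω).le_max' _ hmem
        rw [heq1] at hle
        have : (m : ℕ) + 1 ≤ (m : ℕ) := hle
        omega
      · exact ⟨h3', hτ⟩
    have hfle : ∀ᵐ ω ∂μ, Y (θ ω) m ≤ Y ω m := by
      filter_upwards [hYstep] with ω ⟨h1, h2⟩
      linarith
    obtain ⟨b, hb⟩ := ergodic_ae_const hergo (hYj m) hfle
    have hbθ : ∀ᵐ ω ∂μ, Y (θ ω) m = b := hqmp.ae hb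
    have hfalse : ∀ᵐ ω ∂μ, False := by
      filter_upwards [hYstep, hb, hbθ] with ω ⟨h1, h2⟩ h3 h4
      rw [h3, h4] at h1
      linarith
    obtain ⟨_, hF'⟩ := hfalse.exists
    exact hF'.elim
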